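/- For every integer n ≥ 1 and every partition Λ of 2n, the set of symplectic partitions of 2n that are ≤ Λ in the dominance order is nonempty and possesses a greatest element. -/

import Mathlib

open Classical

namespace Wald

/-- `S f k = λ_1 + … + λ_k` (partitions are indexed from 1; index 0 is unused). -/
def S (f : ℕ → ℕ) (k : ℕ) : ℕ := ∑ j ∈ Finset.Icc 1 k, f j

/-- `f` represents a partition of `N`: nonincreasing on indices `≥ 1`,
finitely many nonzero terms, with total sum `N`. -/
structure IsPartition (f : ℕ → ℕ) (N : ℕ) : Prop where
  mono : ∀ ⦃j k : ℕ⦄, 1 ≤ j → j ≤ k → f k ≤ f j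
  fin : ∃ m, ∀ j, m < j → f j = 0
  total : ∀ m, (∀ j, m < j → f j = 0) → S f m = N

/-- multiplicity of `i` as a term of the partition -/
noncomputable def mult (f : ℕ → ℕ) (i : ℕ) : ℕ := Set.ncard {j : ℕ | 1 ≤ j ∧ f j = i}

/-- dominance order: `Dom f g ↔ f ≤ g` -/
def Dom (f g : ℕ → ℕ) : Prop := ∀ k, S f k ≤ S g k

/-- transposed partition: `(transpose f) j = #{i ≥ 1 : f i ≥ j}` for `j ≥ 1` -/
noncomputable def transpose (f : ℕ → ℕ) : ℕ → ℕ :=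
  fun j => Set.ncard {i : ℕ | 1 ≤ i ∧ 1 ≤ j ∧ j ≤ f i}

/-- union of two partitions (all terms listed together in nonincreasing order);
it is characterized by `transpose (unionP f g) = transpose f + transpose g`. -/
noncomputable def unionP (f g : ℕ → ℕ) : ℕ → ℕ :=
  transpose (fun j => transpose f j + transpose g j)

/-- the partition `(1)` -/
def one1 : ℕ → ℕ := fun j => if j = 1 then 1 else 0

/-- symplectic partition: every odd `i ≥ 1` has even multiplicity -/
def Symp (f : ℕ → ℕ) : Prop := ∀ i, Odd i → Even (mult f i)

/-- orthogonal partition: every even `i ≥ 2` has even multiplicity -/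
def Orth (f : ℕ → ℕ) : Prop := ∀ i, Even i → 1 ≤ i → Even (mult f i)

/-- `λ_{2j-1} ≡ λ_{2j} (mod 2)` for all `j ≥ 1` (speciality for symplectic
partitions of `2n` and orthogonal partitions of `2n`). -/
def SpecialPairs (f : ℕ → ℕ) : Prop := ∀ j, 1 ≤ j → f (2*j - 1) % 2 = f (2*j) % 2

/-- speciality for orthogonal partitions of `2n+1`: `λ_1` odd and
`λ_{2j} ≡ λ_{2j+1} (mod 2)` for all `j ≥ 1`. -/
def SpecialOrthOdd (f : ℕ → ℕ) : Prop :=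
  Odd (f 1) ∧ ∀ j, 1 ≤ j → f (2*j) % 2 = f (2*j + 1) % 2

/-- `Jord_bp` for symplectic partitions: even `i ≥ 2` with positive multiplicity -/
def JordbpS (f : ℕ → ℕ) : Set ℕ := {i | Even i ∧ 2 ≤ i ∧ 1 ≤ mult f i}

/-- `Jord_bp` for orthogonal partitions: odd `i ≥ 1` with positive multiplicity -/
def JordbpO (f : ℕ → ℕ) : Set ℕ := {i | Odd i ∧ 1 ≤ mult f i}

/-- the set `{i_1 > … > i_m}` of terms with odd multiplicity -/
def OddSet (f : ℕ → ℕ) : Set ℕ := {i | Odd (mult f i)}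

/-- for special symplectic partitions: `{i_1 > … > i_{m'}}`, with `0` added if `m` is odd -/
def Dsymp (f : ℕ → ℕ) : Set ℕ :=
  {i | Odd (mult f i) ∨ (i = 0 ∧ Odd (OddSet f).ncard)}

/-- `a = i_{2h-1}` and `b = i_{2h}` for some `h`: consecutive elements of `Dsymp f`
with an even number of elements of `Dsymp f` above `a`. -/
def PairedS (f : ℕ → ℕ) (a b : ℕ) : Prop :=
  b < a ∧ a ∈ Dsymp f ∧ b ∈ Dsymp f ∧ Even ((Dsymp f ∩ Set.Ioi a).ncard) ∧
    Dsymp f ∩ Set.Ioo b a = ∅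

/-- intervals of a special symplectic partition of `2n` -/
def IsIntervalS (f : ℕ → ℕ) (Δ : Set ℕ) : Prop :=
  (∃ a b, PairedS f a b ∧ Δ = {i | (i = 0 ∨ 1 ≤ mult f i) ∧ b ≤ i ∧ i ≤ a}) ∨
  (∃ i, Even i ∧ (i = 0 ∨ (2 ≤ i ∧ 1 ≤ mult f i)) ∧
    (¬ ∃ a b, PairedS f a b ∧ b ≤ i ∧ i ≤ a) ∧ Δ = {i})

/-- `a = i_{2h-1}` and `b = i_{2h}` for some `h` (orthogonal partitions of `2n`) -/
def PairedOE (f : ℕ → ℕ) (a b : ℕ) : Prop :=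
  b < a ∧ a ∈ OddSet f ∧ b ∈ OddSet f ∧ Even ((OddSet f ∩ Set.Ioi a).ncard) ∧
    OddSet f ∩ Set.Ioo b a = ∅

/-- intervals of a special orthogonal partition of `2n` -/
def IsIntervalOE (f : ℕ → ℕ) (Δ : Set ℕ) : Prop :=
  (∃ a b, PairedOE f a b ∧ Δ = {i | 1 ≤ mult f i ∧ b ≤ i ∧ i ≤ a}) ∨
  (∃ i, Odd i ∧ 1 ≤ mult f i ∧ (¬ ∃ a b, PairedOE f a b ∧ b ≤ i ∧ i ≤ a) ∧ Δ = {i})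

/-- `a = i_{2h}` and `b = i_{2h+1}` for some `h ≥ 1` (orthogonal partitions of `2n+1`) -/
def PairedOO (f : ℕ → ℕ) (a b : ℕ) : Prop :=
  b < a ∧ a ∈ OddSet f ∧ b ∈ OddSet f ∧ Odd ((OddSet f ∩ Set.Ioi a).ncard) ∧
    OddSet f ∩ Set.Ioo b a = ∅

/-- intervals of a special orthogonal partition of `2n+1` (convention `i_0 = ∞`) -/
def IsIntervalOO (f : ℕ → ℕ) (Δ : Set ℕ) : Prop :=
  (∃ b, b ∈ OddSet f ∧ OddSet f ∩ Set.Ioi b = ∅ ∧ Δ = {i | 1 ≤ mult f i ∧ b ≤ i}) ∨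
  (∃ a b, PairedOO f a b ∧ Δ = {i | 1 ≤ mult f i ∧ b ≤ i ∧ i ≤ a}) ∨
  (∃ i, Odd i ∧ 1 ≤ mult f i ∧
    (¬ ((∃ b, b ∈ OddSet f ∧ OddSet f ∩ Set.Ioi b = ∅ ∧ b ≤ i) ∨
        (∃ a b, PairedOO f a b ∧ b ≤ i ∧ i ≤ a))) ∧ Δ = {i})

/-- `J(Δ) = {j ≥ 1 : λ_j ∈ Δ}` -/
def Jset (f : ℕ → ℕ) (Δ : Set ℕ) : Set ℕ := {j | 1 ≤ j ∧ f j ∈ Δ}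

/-- `ζ(λ)` for a special symplectic partition (`j_max(Δ_min) = ∞`, so the smallest
interval contributes no `-1`: its `J`-set has no greatest element). -/
noncomputable def zetaS (f : ℕ → ℕ) : ℕ → ℤ := fun j =>
  if ∃ Δ, IsIntervalS f Δ ∧ IsLeast (Jset f Δ) j then 1
  else if ∃ Δ, IsIntervalS f Δ ∧ IsGreatest (Jset f Δ) j then -1
  else 0

/-- `ζ(λ)` for a special orthogonal partition of `2n` -/
noncomputable def zetaOE (f : ℕ → ℕ) : ℕ → ℤ := fun j =>
  if ∃ Δ, IsIntervalOE f Δ ∧ IsLeast (Jset f Δ) j then 1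
  else if ∃ Δ, IsIntervalOE f Δ ∧ IsGreatest (Jset f Δ) j then -1
  else 0

/-- `J^+` for `λ1` special symplectic and `λ2` special orthogonal (of `2n2`) -/
def JplusSet (f1 f2 : ℕ → ℕ) : Set ℕ :=
  {j | 1 ≤ j ∧ Even (f1 j) ∧ Odd (f2 j) ∧
    ((∃ Δ, IsIntervalS f1 Δ ∧ IsLeast (Jset f1 Δ) j) ∨
     (∃ Δ, IsIntervalOE f2 Δ ∧ IsLeast (Jset f2 Δ) j))}

/-- `J^-` -/
def JminusSet (f1 f2 : ℕ → ℕ) : Set ℕ :=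
  {j | 1 ≤ j ∧ Even (f1 j) ∧ Odd (f2 j) ∧
    ((∃ Δ, IsIntervalS f1 Δ ∧ IsGreatest (Jset f1 Δ) j) ∨
     (∃ Δ, IsIntervalOE f2 Δ ∧ IsGreatest (Jset f2 Δ) j))}

/-- the sequence `ξ` -/
noncomputable def xi (f1 f2 : ℕ → ℕ) : ℕ → ℤ := fun j =>
  if j ∈ JplusSet f1 f2 then 1 else if j ∈ JminusSet f1 f2 then -1 else 0

/-- partial sums of an integer-valued sequence indexed from 1 -/
def Sz (f : ℕ → ℤ) (k : ℕ) : ℤ := ∑ j ∈ Finset.Icc 1 k, f j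

/-- `g` is the greatest orthogonal partition of `N` which is dominated by the
sequence `t` (used to define the Spaltenstein-type duality `d`). -/
def IsDualOf (g : ℕ → ℕ) (N : ℕ) (t : ℕ → ℕ) : Prop :=
  (IsPartition g N ∧ Orth g ∧ Dom g t) ∧
  ∀ ν, IsPartition ν N → Orth ν → Dom ν t → Dom ν g

/-- `g = d(f)` for `f` a symplectic partition of `2m`: the greatest orthogonal
partition of `2m+1` dominated by `^t(f ∪ (1))`. -/
def IsSympDual (g : ℕ → ℕ) (m : ℕ) (f : ℕ → ℕ) : Prop :=
  IsDualOf g (2*m+1) (transpose (unionP f one1))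

/-- `g = d(f)` for `f` an orthogonal partition of `2m`: the greatest orthogonal
partition of `2m` dominated by `^tf`. -/
def IsOrthDual (g : ℕ → ℕ) (m : ℕ) (f : ℕ → ℕ) : Prop :=
  IsDualOf g (2*m) (transpose f)

section Aux

/-! ### Basic lemmas about `S` -/

lemma S_zero (f : ℕ → ℕ) : S f 0 = 0 := by simp [S]

lemma S_succ (f : ℕ → ℕ) (k : ℕ) : S f (k + 1) = S f k + f (k + 1) := by
  unfold S
  rw [Finset.sum_Icc_succ_top (by omega)]

lemma S_mono (f : ℕ → ℕ) {k l : ℕ} (h : k ≤ l) : S f k ≤ S f l :=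
  Finset.sum_le_sum_of_subset (Finset.Icc_subset_Icc_right h)

lemma S_congr {f g : ℕ → ℕ} (h : ∀ j, 1 ≤ j → f j = g j) (k : ℕ) : S f k = S g k :=
  Finset.sum_congr rfl (fun j hj => h j (Finset.mem_Icc.mp hj).1)

lemma S_stable {f : ℕ → ℕ} {m k : ℕ} (h : ∀ j, m < j → f j = 0) (hmk : m ≤ k) :
    S f k = S f m := by
  induction k, hmk using Nat.le_induction with
  | base => rfl
  | succ k hk ih => rw [S_succ, h (k+1) (by omega), ih]; ring

lemma part_le {f : ℕ → ℕ} {N : ℕ} (hf : IsPartition f N) (k : ℕ) : S f k ≤ N := by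
  obtain ⟨m, hm⟩ := hf.fin
  have h1 : S f (max k m) = N := hf.total _ (fun j hj => hm j (by omega))
  have h2 := S_mono f (le_max_left k m)
  omega

lemma part_zero {f : ℕ → ℕ} {N : ℕ} (hf : IsPartition f N) {j : ℕ} (hj : N < j) :
    f j = 0 := by
  by_contra h
  have h1 : ∀ i ∈ Finset.Icc 1 j, 1 ≤ f i := by
    intro i hi
    rw [Finset.mem_Icc] at hi
    have := hf.mono hi.1 hi.2
    omega
  have h2 : j ≤ S f j := by
    calc j = ∑ _i ∈ Finset.Icc 1 j, 1 := by simp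
    _ ≤ S f j := Finset.sum_le_sum h1
  have := part_le hf j
  omega

lemma part_total {f : ℕ → ℕ} {N : ℕ} (hf : IsPartition f N) {k : ℕ} (hk : N ≤ k) :
    S f k = N :=
  hf.total k (fun _j hj => part_zero hf (by omega))

/-! ### The Galois connection between a partition and its transpose -/

lemma lower_eq_Icc {A : Set ℕ} (hfin : A.Finite) (hpos : ∀ l ∈ A, 1 ≤ l)
    (hdc : ∀ l ∈ A, ∀ l', 1 ≤ l' → l' ≤ l → l' ∈ A) : A = Set.Icc 1 A.ncard := by
  rcases A.eq_empty_or_nonempty with h | h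
  · simp [h]
  · have hbdd : BddAbove A := hfin.bddAbove
    have hs : sSup A ∈ A := Nat.sSup_mem h hbdd
    have hA : A = Set.Icc 1 (sSup A) := by
      ext l
      constructor
      · exact fun hl => ⟨hpos l hl, le_csSup hbdd hl⟩
      · rintro ⟨h1, h2⟩
        exact hdc _ hs _ h1 h2
    have hn : A.ncard = sSup A := by
      conv_lhs => rw [hA]
      rw [← Finset.coe_Icc, Set.ncard_coe_finset, Nat.card_Icc]
      omega
    rw [hn]
    exact hA

lemma galois {f : ℕ → ℕ} {N : ℕ} (hf : IsPartition f N) {i j : ℕ}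
    (hi : 1 ≤ i) (hj : 1 ≤ j) : j ≤ f i ↔ i ≤ transpose f j := by
  have hfin : {l : ℕ | 1 ≤ l ∧ 1 ≤ j ∧ j ≤ f l}.Finite := by
    apply Set.Finite.subset (Set.finite_Icc 1 N)
    rintro l ⟨h1, _, h2⟩
    refine ⟨h1, ?_⟩
    by_contra hc
    have := part_zero hf (j := l) (by omega)
    omega
  have heq := lower_eq_Icc hfin (fun l hl => hl.1)
    (fun l hl l' h1 h2 => ⟨h1, hj, le_trans hl.2.2 (hf.mono h1 h2)⟩)
  have ht : transpose f j = {l : ℕ | 1 ≤ l ∧ 1 ≤ j ∧ j ≤ f l}.ncard := rfl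
  constructor
  · intro h
    have hm : i ∈ {l : ℕ | 1 ≤ l ∧ 1 ≤ j ∧ j ≤ f l} := ⟨hi, hj, h⟩
    rw [heq, Set.mem_Icc] at hm
    omega
  · intro h
    have hm : i ∈ {l : ℕ | 1 ≤ l ∧ 1 ≤ j ∧ j ≤ f l} := by
      rw [heq, Set.mem_Icc]
      exact ⟨hi, by omega⟩
    exact hm.2.2

lemma transpose_eq_card {f : ℕ → ℕ} {N : ℕ} (hf : IsPartition f N) {j : ℕ} (hj : 1 ≤ j) :
    transpose f j = ((Finset.Icc 1 N).filter (fun i => j ≤ f i)).card := by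
  have hset : {i : ℕ | 1 ≤ i ∧ 1 ≤ j ∧ j ≤ f i}
      = ↑((Finset.Icc 1 N).filter (fun i => j ≤ f i)) := by
    ext i
    simp only [Set.mem_setOf_eq, Finset.coe_filter, Finset.mem_Icc]
    constructor
    · rintro ⟨h1, _, h2⟩
      refine ⟨⟨h1, ?_⟩, h2⟩
      by_contra hc
      have := part_zero hf (j := i) (by omega)
      omega
    · rintro ⟨⟨h1, _⟩, h2⟩
      exact ⟨h1, hj, h2⟩
  rw [transpose, hset, Set.ncard_coe_finset]

lemma transpose_transpose {f : ℕ → ℕ} {N : ℕ} (hf : IsPartition f N) {i : ℕ} (hi : 1 ≤ i) :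
    transpose (transpose f) i = f i := by
  have hset : {j : ℕ | 1 ≤ j ∧ 1 ≤ i ∧ i ≤ transpose f j} = Set.Icc 1 (f i) := by
    ext j
    simp only [Set.mem_setOf_eq, Set.mem_Icc]
    constructor
    · rintro ⟨hj, _, hij⟩
      exact ⟨hj, (galois hf hi hj).mpr hij⟩
    · rintro ⟨hj, hjf⟩
      exact ⟨hj, hi, (galois hf hi hj).mp hjf⟩
  rw [transpose, hset, ← Finset.coe_Icc, Set.ncard_coe_finset, Nat.card_Icc]
  omega

lemma sum_split (g : ℕ → ℕ) {m N : ℕ} (h : m ≤ N) :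
    ∑ i ∈ Finset.Icc 1 N, g i
      = ∑ i ∈ Finset.Icc 1 m, g i + ∑ i ∈ Finset.Icc (m+1) N, g i := by
  have h2 := Finset.sum_Ioc_consecutive g (Nat.zero_le m) h
  rw [← Finset.Icc_add_one_left_eq_Ioc 0 N, ← Finset.Icc_add_one_left_eq_Ioc 0 m, ← Finset.Icc_add_one_left_eq_Ioc m N] at h2
  exact h2.symm

lemma S_transpose {f : ℕ → ℕ} {N : ℕ} (hf : IsPartition f N) (k : ℕ) :
    S (transpose f) k = ∑ i ∈ Finset.Icc 1 N, min (f i) k := by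
  unfold S
  have h1 : ∀ j ∈ Finset.Icc 1 k, transpose f j
      = ∑ i ∈ Finset.Icc 1 N, (if j ≤ f i then 1 else 0) := by
    intro j hj
    rw [Finset.mem_Icc] at hj
    rw [transpose_eq_card hf hj.1, Finset.card_filter]
  rw [Finset.sum_congr rfl h1, Finset.sum_comm]
  refine Finset.sum_congr rfl (fun i _ => ?_)
  have h2 : (Finset.Icc 1 k).filter (fun j => j ≤ f i) = Finset.Icc 1 (min (f i) k) := by
    ext j
    simp only [Finset.mem_filter, Finset.mem_Icc]
    omega
  rw [← Finset.card_filter, h2, Nat.card_Icc]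
  omega

lemma key_le {f : ℕ → ℕ} {N : ℕ} (hf : IsPartition f N) (k m : ℕ) :
    S (transpose f) k + S f m ≤ k * m + N := by
  rcases le_or_gt N m with h | h
  · have h1 : S f m = N := part_total hf h
    have h2 : S (transpose f) k ≤ k * N := by
      rw [S_transpose hf]
      calc ∑ i ∈ Finset.Icc 1 N, min (f i) k ≤ ∑ _i ∈ Finset.Icc 1 N, k :=
        Finset.sum_le_sum (fun i _ => min_le_right _ _)
      _ = N * k := by simp [Nat.card_Icc, mul_comm]
      _ = k * N := by ring
    have h3 : k * N ≤ k * m := Nat.mul_le_mul_left k h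
    omega
  · have hm : m ≤ N := le_of_lt h
    rw [S_transpose hf, sum_split _ hm]
    have h1 : ∑ i ∈ Finset.Icc 1 m, min (f i) k ≤ m * k := by
      calc ∑ i ∈ Finset.Icc 1 m, min (f i) k ≤ ∑ _i ∈ Finset.Icc 1 m, k :=
        Finset.sum_le_sum (fun i _ => min_le_right _ _)
      _ = m * k := by simp [Nat.card_Icc, mul_comm]
    have h2 : ∑ i ∈ Finset.Icc (m+1) N, min (f i) k ≤ ∑ i ∈ Finset.Icc (m+1) N, f i :=
      Finset.sum_le_sum (fun i _ => min_le_left _ _)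
    have h3 : S f m + ∑ i ∈ Finset.Icc (m+1) N, f i = N := by
      rw [S, ← sum_split f hm]
      exact part_total hf le_rfl
    have h4 : m * k = k * m := by ring
    omega

lemma key_eq {f : ℕ → ℕ} {N : ℕ} (hf : IsPartition f N) {k : ℕ} (hk : 1 ≤ k) :
    ∃ m, S (transpose f) k + S f m = k * m + N := by
  refine ⟨transpose f k, ?_⟩
  set m := transpose f k with hmdef
  have hmN : m ≤ N := by
    rw [hmdef, transpose_eq_card hf hk]
    calc ((Finset.Icc 1 N).filter (fun i => k ≤ f i)).card ≤ (Finset.Icc 1 N).card :=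
      Finset.card_filter_le _ _
    _ = N := by rw [Nat.card_Icc]; omega
  rw [S_transpose hf, sum_split _ hmN]
  have h1 : ∀ i ∈ Finset.Icc 1 m, min (f i) k = k := by
    intro i hi
    rw [Finset.mem_Icc] at hi
    have : k ≤ f i := (galois hf hi.1 hk).mpr hi.2
    omega
  have h2 : ∀ i ∈ Finset.Icc (m+1) N, min (f i) k = f i := by
    intro i hi
    rw [Finset.mem_Icc] at hi
    have h3 : ¬ (i ≤ m) := by omega
    have h4 : ¬ (k ≤ f i) := fun hc => h3 ((galois hf (by omega) hk).mp hc)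
    omega
  rw [Finset.sum_congr rfl h1,
    (Finset.sum_congr rfl h2 : _ = ∑ i ∈ Finset.Icc (m+1) N, f i),
    Finset.sum_const, Nat.card_Icc]
  have h3 : S f N = N := part_total hf le_rfl
  rw [show S f N = ∑ i ∈ Finset.Icc 1 N, f i from rfl, sum_split f hmN] at h3
  rw [show S f m = ∑ i ∈ Finset.Icc 1 m, f i from rfl]
  simp only [smul_eq_mul, Nat.add_sub_cancel]
  rw [Nat.mul_comm m k]
  omega

lemma dom_transpose {f g : ℕ → ℕ} {N : ℕ} (hf : IsPartition f N) (hg : IsPartition g N)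
    (h : Dom f g) : Dom (transpose g) (transpose f) := by
  intro k
  rcases Nat.eq_zero_or_pos k with rfl | hk
  · simp [S_zero]
  obtain ⟨m, hm⟩ := key_eq hf hk
  have h1 := key_le hg k m
  have h2 := h m
  omega

lemma transpose_isPartition {f : ℕ → ℕ} {N : ℕ} (hf : IsPartition f N) :
    IsPartition (transpose f) N := by
  constructor
  · intro j k hj hjk
    rcases Nat.eq_zero_or_pos (transpose f k) with h | h
    · omega
    · have hk1 : 1 ≤ k := le_trans hj hjk
      have h1 : k ≤ f (transpose f k) := (galois hf h hk1).mpr le_rfl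
      exact (galois hf h hj).mp (le_trans hjk h1)
  · refine ⟨f 1, fun j hj => ?_⟩
    by_contra hc
    have h1 : 1 ≤ transpose f j := Nat.one_le_iff_ne_zero.mpr hc
    have h2 : j ≤ f 1 := (galois hf le_rfl (by omega)).mpr h1
    omega
  · intro m hm
    have hf1m : f 1 ≤ m := by
      by_contra hc
      push_neg at hc
      have h0 : transpose f (m+1) = 0 := hm (m+1) (by omega)
      have h1 : 1 ≤ transpose f (m+1) := (galois hf le_rfl (by omega)).mp (by omega)
      omega
    rw [S_transpose hf]
    have h1 : ∀ i ∈ Finset.Icc 1 N, min (f i) m = f i := by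
      intro i hi
      rw [Finset.mem_Icc] at hi
      have := hf.mono le_rfl hi.1
      omega
    rw [Finset.sum_congr rfl h1]
    exact part_total hf le_rfl

/-! ### Symplectic partitions via the transpose -/

lemma transpose_succ_mult {f : ℕ → ℕ} {N : ℕ} (hf : IsPartition f N) {i : ℕ} (hi : 1 ≤ i) :
    transpose f i = transpose f (i+1) + mult f i := by
  have hA : {l : ℕ | 1 ≤ l ∧ 1 ≤ i ∧ i ≤ f l}
      = {l : ℕ | 1 ≤ l ∧ 1 ≤ i+1 ∧ i+1 ≤ f l} ∪ {l : ℕ | 1 ≤ l ∧ f l = i} := by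
    ext l
    simp only [Set.mem_setOf_eq, Set.mem_union]
    omega
  have hsub : ∀ c : ℕ, 1 ≤ c → {l : ℕ | 1 ≤ l ∧ c ≤ f l} ⊆ Set.Icc 1 N := by
    rintro c hc l ⟨h1, h2⟩
    refine ⟨h1, ?_⟩
    by_contra hcon
    have := part_zero hf (j := l) (by omega)
    omega
  have hfin1 : {l : ℕ | 1 ≤ l ∧ 1 ≤ i+1 ∧ i+1 ≤ f l}.Finite := by
    apply Set.Finite.subset (Set.finite_Icc 1 N)
    rintro l ⟨h1, _, h2⟩
    exact hsub (i+1) (by omega) ⟨h1, h2⟩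
  have hfin2 : {l : ℕ | 1 ≤ l ∧ f l = i}.Finite := by
    apply Set.Finite.subset (Set.finite_Icc 1 N)
    rintro l ⟨h1, h2⟩
    exact hsub i hi ⟨h1, by omega⟩
  have hdisj : Disjoint {l : ℕ | 1 ≤ l ∧ 1 ≤ i+1 ∧ i+1 ≤ f l} {l : ℕ | 1 ≤ l ∧ f l = i} := by
    rw [Set.disjoint_left]
    rintro l ⟨_, _, h2⟩ ⟨_, h4⟩
    omega
  rw [transpose, transpose, mult, hA, Set.ncard_union_eq hdisj hfin1 hfin2]

lemma symp_iff {f : ℕ → ℕ} {N : ℕ} (hf : IsPartition f N) :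
    Symp f ↔ ∀ j, Even (S (transpose f) (2*j)) := by
  have hstep : ∀ j : ℕ, S (transpose f) (2*(j+1))
      = S (transpose f) (2*j) + transpose f (2*j+1) + transpose f (2*j+2) := by
    intro j
    have e1 : 2*(j+1) = (2*j+1) + 1 := by ring
    rw [e1, S_succ, S_succ]
  constructor
  · intro hs j
    induction j with
    | zero => simp [S_zero]
    | succ j ih =>
      have h2 : transpose f (2*j+1) = transpose f (2*j+2) + mult f (2*j+1) :=
        transpose_succ_mult hf (by omega)
      have h3 : Even (mult f (2*j+1)) := hs _ ⟨j, by ring⟩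
      rw [hstep j, h2]
      rw [Nat.even_iff] at ih h3 ⊢
      omega
  · intro he i hi
    obtain ⟨j, rfl⟩ := hi
    have h2 : transpose f (2*j+1) = transpose f (2*j+2) + mult f (2*j+1) :=
      transpose_succ_mult hf (by omega)
    have e1 := he (j+1)
    have e2 := he j
    rw [hstep j] at e1
    rw [Nat.even_iff] at e1 e2 ⊢
    omega

/-! ### The meet of two partitions in transpose coordinates -/

def minpart (T1 T2 : ℕ → ℕ) : ℕ → ℕ := fun k =>
  if k = 0 then 0
  else min (S T1 k) (S T2 k) - min (S T1 (k-1)) (S T2 (k-1))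

lemma S_minpart (T1 T2 : ℕ → ℕ) (k : ℕ) :
    S (minpart T1 T2) k = min (S T1 k) (S T2 k) := by
  induction k with
  | zero => simp [S_zero]
  | succ k ih =>
    show S (minpart T1 T2) (k+1) = min (S T1 (k+1)) (S T2 (k+1))
    rw [S_succ, ih]
    have h1 : minpart T1 T2 (k+1)
        = min (S T1 (k+1)) (S T2 (k+1)) - min (S T1 k) (S T2 k) := by
      simp [minpart]
    have h2 := S_mono T1 (show k ≤ k+1 by omega)
    have h3 := S_mono T2 (show k ≤ k+1 by omega)
    omega

lemma minpart_isPartition {T1 T2 : ℕ → ℕ} {N : ℕ}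
    (hT1 : IsPartition T1 N) (hT2 : IsPartition T2 N) :
    IsPartition (minpart T1 T2) N := by
  have hstep : ∀ k, 1 ≤ k → minpart T1 T2 (k+1) ≤ minpart T1 T2 k := by
    intro k hk
    have c1 : S T1 (k+1) + S T1 (k-1) ≤ 2 * S T1 k := by
      have e1 : S T1 (k+1) = S T1 k + T1 (k+1) := S_succ _ _
      have e2 : S T1 k = S T1 (k-1) + T1 k := by
        have e := S_succ T1 (k-1)
        have ek : k - 1 + 1 = k := by omega
        rw [ek] at e
        exact e
      have e3 : T1 (k+1) ≤ T1 k := hT1.mono hk (by omega)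
      omega
    have c2 : S T2 (k+1) + S T2 (k-1) ≤ 2 * S T2 k := by
      have e1 : S T2 (k+1) = S T2 k + T2 (k+1) := S_succ _ _
      have e2 : S T2 k = S T2 (k-1) + T2 k := by
        have e := S_succ T2 (k-1)
        have ek : k - 1 + 1 = k := by omega
        rw [ek] at e
        exact e
      have e3 : T2 (k+1) ≤ T2 k := hT2.mono hk (by omega)
      omega
    have m1 := S_mono T1 (Nat.sub_le k 1)
    have m2 := S_mono T2 (Nat.sub_le k 1)
    have m3 := S_mono T1 (show k ≤ k + 1 by omega)
    have m4 := S_mono T2 (show k ≤ k + 1 by omega)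
    simp only [minpart, if_neg (by omega : ¬ k + 1 = 0), if_neg (by omega : ¬ k = 0)]
    have hk1 : k + 1 - 1 = k := by omega
    rw [hk1]
    omega
  constructor
  · intro j k hj hjk
    induction k, hjk using Nat.le_induction with
    | base => exact le_refl _
    | succ k hk ih => exact le_trans (hstep k (by omega)) ih
  · refine ⟨N, fun j hj => ?_⟩
    have h1 : S T1 j = N := part_total hT1 (by omega)
    have h2 : S T2 j = N := part_total hT2 (by omega)
    have h3 : S T1 (j-1) = N := part_total hT1 (by omega)
    have h4 : S T2 (j-1) = N := part_total hT2 (by omega)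
    simp only [minpart, if_neg (by omega : ¬ j = 0)]
    omega
  · intro m hm
    rw [S_minpart]
    have h1 : S (minpart T1 T2) (max m N) = S (minpart T1 T2) m := S_stable hm (le_max_left _ _)
    rw [S_minpart, S_minpart] at h1
    have h2 : S T1 (max m N) = N := part_total hT1 (le_max_right _ _)
    have h3 : S T2 (max m N) = N := part_total hT2 (le_max_right _ _)
    omega

/-! ### The join of two symplectic partitions below `Λ` -/

lemma join {N : ℕ} {Λ f1 f2 : ℕ → ℕ} (hΛ : IsPartition Λ N)
    (h1 : IsPartition f1 N) (h1s : Symp f1) (h1d : Dom f1 Λ)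
    (h2 : IsPartition f2 N) (h2s : Symp f2) (h2d : Dom f2 Λ) :
    ∃ h, IsPartition h N ∧ Symp h ∧ Dom h Λ ∧ Dom f1 h ∧ Dom f2 h := by
  set T1 := transpose f1 with hT1def
  set T2 := transpose f2 with hT2def
  have hT1 : IsPartition T1 N := transpose_isPartition h1
  have hT2 : IsPartition T2 N := transpose_isPartition h2
  set T := minpart T1 T2 with hTdef
  have hT : IsPartition T N := minpart_isPartition hT1 hT2
  have hS : ∀ k, S T k = min (S T1 k) (S T2 k) := S_minpart _ _
  refine ⟨transpose T, transpose_isPartition hT, ?_, ?_, ?_, ?_⟩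
  · rw [symp_iff (transpose_isPartition hT)]
    intro j
    have e0 : S (transpose (transpose T)) (2*j) = S T (2*j) :=
      S_congr (fun l hl => transpose_transpose hT hl) _
    rw [e0, hS]
    have e1 := (symp_iff h1).mp h1s j
    have e2 := (symp_iff h2).mp h2s j
    rcases le_total (S T1 (2*j)) (S T2 (2*j)) with h | h
    · rwa [min_eq_left h]
    · rwa [min_eq_right h]
  · have d1 : Dom (transpose Λ) T1 := dom_transpose h1 hΛ h1d
    have d2 : Dom (transpose Λ) T2 := dom_transpose h2 hΛ h2d
    have dT : Dom (transpose Λ) T := fun k => by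
      rw [hS]
      exact le_min (d1 k) (d2 k)
    have d3 := dom_transpose (transpose_isPartition hΛ) hT dT
    intro k
    calc S (transpose T) k ≤ S (transpose (transpose Λ)) k := d3 k
    _ = S Λ k := S_congr (fun l hl => transpose_transpose hΛ hl) _
  · have dT1 : Dom T T1 := fun k => by
      rw [hS]; exact min_le_left _ _
    have d3 := dom_transpose hT hT1 dT1
    intro k
    calc S f1 k = S (transpose (transpose f1)) k :=
      (S_congr (fun l hl => transpose_transpose h1 hl) _).symm
    _ ≤ S (transpose T) k := d3 k
  · have dT2 : Dom T T2 := fun k => by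
      rw [hS]; exact min_le_right _ _
    have d3 := dom_transpose hT hT2 dT2
    intro k
    calc S f2 k = S (transpose (transpose f2)) k :=
      (S_congr (fun l hl => transpose_transpose h2 hl) _).symm
    _ ≤ S (transpose T) k := d3 k

/-! ### The minimal symplectic partition `1^{2n}` -/

lemma ones_mem (n : ℕ) (hn : 1 ≤ n) (Λ : ℕ → ℕ) (hΛ : IsPartition Λ (2*n)) :
    IsPartition (fun j => if 1 ≤ j ∧ j ≤ 2*n then 1 else 0) (2*n) ∧
    Symp (fun j => if 1 ≤ j ∧ j ≤ 2*n then 1 else 0) ∧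
    Dom (fun j => if 1 ≤ j ∧ j ≤ 2*n then 1 else 0) Λ := by
  set o : ℕ → ℕ := fun j => if 1 ≤ j ∧ j ≤ 2*n then 1 else 0 with hodef
  have hP : IsPartition o (2*n) := by
    constructor
    · intro j k hj hjk
      by_cases hk : 1 ≤ k ∧ k ≤ 2*n
      · have hj2 : 1 ≤ j ∧ j ≤ 2*n := ⟨hj, by omega⟩
        simp [hodef, hk, hj2]
      · simp [hodef, hk]
    · exact ⟨2*n, fun j hj => by simp [hodef]; omega⟩
    · intro m hm
      have hm2 : 2*n ≤ m := by
        by_contra hc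
        have := hm (m+1) (by omega)
        simp [hodef] at this
        omega
      have h1 : S o m = S o (2*n) := S_stable (fun j hj => by simp [hodef]; omega) hm2
      rw [h1]
      have h2 : ∀ j ∈ Finset.Icc 1 (2*n), o j = 1 := by
        intro j hj
        rw [Finset.mem_Icc] at hj
        simp [hodef, hj.1, hj.2]
      rw [S, Finset.sum_congr rfl h2, Finset.sum_const, Nat.card_Icc]
      simp
  refine ⟨hP, ?_, ?_⟩
  · intro i hi
    by_cases h1 : i = 1
    · subst h1
      have hset : {j : ℕ | 1 ≤ j ∧ o j = 1} = Set.Icc 1 (2*n) := by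
        ext j
        by_cases hj : 1 ≤ j ∧ j ≤ 2*n <;> simp [hodef, hj, Set.mem_Icc] <;> omega
      rw [mult, hset, ← Finset.coe_Icc, Set.ncard_coe_finset, Nat.card_Icc]
      exact ⟨n, by omega⟩
    · have hi0 : i ≠ 0 := by rintro rfl; exact (Nat.not_odd_iff_even.mpr Even.zero) hi
      have hset : {j : ℕ | 1 ≤ j ∧ o j = i} = ∅ := by
        ext j
        simp only [Set.mem_setOf_eq, Set.mem_empty_iff_false, iff_false]
        rintro ⟨hj1, hj2⟩
        by_cases hj : 1 ≤ j ∧ j ≤ 2*n <;> simp [hodef, hj] at hj2 <;> omega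
      rw [mult, hset]
      simp
  · intro k
    by_cases hz : ∃ j, 1 ≤ j ∧ j ≤ k ∧ Λ j = 0
    · obtain ⟨j, hj1, hj2, hj3⟩ := hz
      have hΛ0 : ∀ l, j - 1 < l → Λ l = 0 := by
        intro l hl
        have := hΛ.mono hj1 (show j ≤ l by omega)
        omega
      have h1 : S Λ (j-1) = 2*n := hΛ.total _ hΛ0
      have h2 : S Λ (j-1) ≤ S Λ k := S_mono _ (by omega)
      have h3 : S o k ≤ 2*n := part_le hP k
      omega
    · push_neg at hz
      have h1 : S o k ≤ k := by
        calc S o k ≤ ∑ _j ∈ Finset.Icc 1 k, 1 :=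
          Finset.sum_le_sum (fun j _ => by simp [hodef]; split <;> omega)
        _ = k := by simp
      have h2 : k ≤ S Λ k := by
        calc k = ∑ _j ∈ Finset.Icc 1 k, 1 := by simp
        _ ≤ S Λ k := Finset.sum_le_sum (fun j hj => by
            rw [Finset.mem_Icc] at hj
            have := hz j hj.1 hj.2
            omega)
      omega

end Aux
/-- The set of symplectic partitions of `2n` dominated by a given partition `Λ`
is nonempty and has a greatest element. -/
theorem stmt14 (n : ℕ) (hn : 1 ≤ n) (Λ : ℕ → ℕ) (hΛ : IsPartition Λ (2*n)) :
    (∃ f, IsPartition f (2*n) ∧ Symp f ∧ Dom f Λ) ∧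
    ∃ g, (IsPartition g (2*n) ∧ Symp g ∧ Dom g Λ) ∧
      ∀ f, IsPartition f (2*n) → Symp f → Dom f Λ → Dom f g := by
  obtain ⟨hoP, hoS, hoD⟩ := ones_mem n hn Λ hΛ
  have hex : ∃ f, IsPartition f (2*n) ∧ Symp f ∧ Dom f Λ :=
    ⟨_, hoP, hoS, hoD⟩
  refine ⟨hex, ?_⟩
  set Φ : (ℕ → ℕ) → ℕ := fun f => ∑ k ∈ Finset.Icc 1 (2*n), S f k with hΦdef
  set V : Set ℕ := {v | ∃ f, (IsPartition f (2*n) ∧ Symp f ∧ Dom f Λ) ∧ Φ f = v} with hVdef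
  have hVne : V.Nonempty := ⟨Φ _, _, ⟨hoP, hoS, hoD⟩, rfl⟩
  have hVbdd : BddAbove V := by
    refine ⟨2*n*(2*n), ?_⟩
    rintro v ⟨f, hf, rfl⟩
    calc Φ f ≤ ∑ _k ∈ Finset.Icc 1 (2*n), 2*n :=
      Finset.sum_le_sum (fun k _ => part_le hf.1 k)
    _ = 2*n*(2*n) := by simp [Nat.card_Icc, mul_comm]
  obtain ⟨g, hgP, hgΦ⟩ := Nat.sSup_mem hVne hVbdd
  refine ⟨g, hgP, ?_⟩
  intro f hf hfs hfd
  obtain ⟨h, hhP, hhS, hhD, hfh, hgh⟩ := join hΛ hf hfs hfd hgP.1 hgP.2.1 hgP.2.2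
  have hΦh : Φ h ≤ Φ g := by
    rw [hgΦ]
    exact le_csSup hVbdd ⟨h, ⟨hhP, hhS, hhD⟩, rfl⟩
  have hterm : ∀ k ∈ Finset.Icc 1 (2*n), S g k ≤ S h k := fun k _ => hgh k
  have hΦeq : Φ g = Φ h := le_antisymm (Finset.sum_le_sum hterm) hΦh
  have heq : ∀ k ∈ Finset.Icc 1 (2*n), S g k = S h k :=
    (Finset.sum_eq_sum_iff_of_le hterm).mp hΦeq
  intro k
  rcases Nat.eq_zero_or_pos k with rfl | hk
  · simp [S_zero]
  rcases le_or_gt k (2*n) with hk2 | hk2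
  · have h1 := heq k (Finset.mem_Icc.mpr ⟨hk, hk2⟩)
    calc S f k ≤ S h k := hfh k
    _ = S g k := h1.symm
  · have hfk : S f k = 2*n := part_total hf (by omega)
    have hgk : S g k = 2*n := part_total hgP.1 (by omega)
    omega

end Wald
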